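/- Let (X, d) be a metric space, E ⊆ X with H^{n-1} σ-finite on E. If N ⊆ E satisfies H^{n-1}(N) = 0, then H^n(N × ℝ) = 0 in the product metric space X × ℝ. -/

import Mathlib

open MeasureTheory Set Filter ENNReal

lemma diam_prod_le' {X Y : Type*} [PseudoEMetricSpace X] [PseudoEMetricSpace Y]
    (s : Set X) (t : Set Y) :
    EMetric.diam (s ×ˢ t) ≤ max (EMetric.diam s) (EMetric.diam t) :=
  EMetric.diam_le fun p hp q hq => by
    rw [Prod.edist_eq]
    exact max_le_max (EMetric.edist_le_diam_of_mem hp.1 hq.1)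
      (EMetric.edist_le_diam_of_mem hp.2 hq.2)

lemma exists_cover_of_null {X : Type*} [MetricSpace X] [MeasurableSpace X] [BorelSpace X]
    {d : ℝ} (hd : 0 < d) {s : Set X} (h : μH[d] s = 0) {r ε : ℝ≥0∞}
    (hr : 0 < r) (hε : 0 < ε) :
    ∃ t : ℕ → Set X, (s ⊆ ⋃ i, t i) ∧ (∀ i, EMetric.diam (t i) ≤ r) ∧
      ∑' i, EMetric.diam (t i) ^ d < ε := by
  rw [Measure.hausdorffMeasure_apply] at h
  have h2 : (⨅ (t : ℕ → Set X) (_ : s ⊆ ⋃ n, t n) (_ : ∀ n, EMetric.diam (t n) ≤ r),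
      ∑' n, ⨆ _ : (t n).Nonempty, EMetric.diam (t n) ^ d) = 0 := by
    refine le_antisymm ?_ zero_le
    rw [← h]
    exact le_iSup₂ (f := fun (r : ℝ≥0∞) (_ : 0 < r) =>
      ⨅ (t : ℕ → Set X) (_ : s ⊆ ⋃ n, t n) (_ : ∀ n, EMetric.diam (t n) ≤ r),
        ∑' n, ⨆ _ : (t n).Nonempty, EMetric.diam (t n) ^ d) r hr
  have h3 := h2 ▸ hε
  obtain ⟨t, h4⟩ := iInf_lt_iff.mp h3
  obtain ⟨hts, h5⟩ := iInf_lt_iff.mp h4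
  obtain ⟨htr, h6⟩ := iInf_lt_iff.mp h5
  refine ⟨t, hts, htr, ?_⟩
  have : ∀ n, EMetric.diam (t n) ^ d = ⨆ _ : (t n).Nonempty, EMetric.diam (t n) ^ d := by
    intro n
    rcases Set.eq_empty_or_nonempty (t n) with he | hne
    · simp [he, EMetric.diam, ENNReal.zero_rpow_of_pos hd]
    · rw [iSup_pos hne]
  calc ∑' n, EMetric.diam (t n) ^ d
      = ∑' n, ⨆ _ : (t n).Nonempty, EMetric.diam (t n) ^ d := tsum_congr this
    _ < ε := h6

lemma slab_null {X : Type*} [MetricSpace X] [MeasurableSpace X] [BorelSpace X]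
    {m : ℕ} (hm : 1 ≤ m) {s : Set X} (hs : μH[(m : ℝ)] s = 0) (a : ℝ) :
    (μH[(m : ℝ) + 1] : Measure (X × ℝ)) (s ×ˢ Set.Icc a (a + 1)) = 0 := by
  have hhalf : (2⁻¹ : ℝ≥0∞) < 1 := by
    rw [ENNReal.inv_lt_one]; exact one_lt_two
  set ek : ℕ → ℝ≥0∞ := fun k => (2⁻¹ : ℝ≥0∞) ^ k with hek
  have hek0 : ∀ k, 0 < ek k := fun k =>
    ENNReal.pow_pos (ENNReal.inv_pos.mpr ENNReal.ofNat_ne_top) k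
  have hek1 : ∀ k, ek k ≤ 1 := fun k => pow_le_one' hhalf.le k
  have hektop : ∀ k, ek k ≠ ∞ := fun k =>
    (lt_of_le_of_lt (hek1 k) ENNReal.one_lt_top).ne
  -- choose covers
  have hmpos : (0 : ℝ) < (m : ℝ) := by exact_mod_cast hm
  have H : ∀ k : ℕ, ∃ t : ℕ → Set X, (s ⊆ ⋃ i, t i) ∧
      (∀ i, EMetric.diam (t i) ≤ ek k) ∧ ∑' i, EMetric.diam (t i) ^ (m : ℝ) < ek k :=
    fun k => exists_cover_of_null hmpos hs (hek0 k) (hek0 k)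
  choose t hcov hdiam hsum using H
  -- enlarged diameters
  set δ : ℕ → ℕ → ℝ≥0∞ := fun k i => max (EMetric.diam (t k i)) (ek k * ek i) with hδ
  have hδ0 : ∀ k i, δ k i ≠ 0 := fun k i => by
    simp only [hδ]
    exact fun h => (mul_ne_zero (hek0 k).ne' (hek0 i).ne') (le_antisymm (h ▸ le_max_right _ _) zero_le)
  have hδle : ∀ k i, δ k i ≤ ek k := fun k i =>
    max_le (hdiam k i) (le_trans (mul_le_of_le_one_right' (hek1 i)) le_rfl)
  have hδtop : ∀ k i, δ k i ≠ ∞ := fun k i => ((hδle k i).trans_lt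
    ((hek1 k).trans_lt ENNReal.one_lt_top)).ne
  set δr : ℕ → ℕ → ℝ := fun k i => (δ k i).toReal with hδr
  have hδr0 : ∀ k i, 0 < δr k i := fun k i =>
    ENNReal.toReal_pos (hδ0 k i) (hδtop k i)
  have hofδ : ∀ k i, ENNReal.ofReal (δr k i) = δ k i := fun k i =>
    ENNReal.ofReal_toReal (hδtop k i)
  -- the covering sets of the product
  set u : ℕ → ℕ × ℕ → Set (X × ℝ) := fun k p =>
    if (p.2 : ℝ) * δr k p.1 ≤ 1 then
      (t k p.1) ×ˢ Set.Icc (a + p.2 * δr k p.1) (a + (p.2 + 1) * δr k p.1)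
    else ∅ with hu
  have hudiam : ∀ k p, EMetric.diam (u k p) ≤ δ k p.1 := by
    intro k p
    simp only [hu]
    split_ifs with hif
    · refine (diam_prod_le' _ _).trans (max_le ?_ ?_)
      · exact le_max_left _ _
      · rw [EMetric.diam, Real.ediam_Icc]
        rw [show a + ((p.2 : ℝ) + 1) * δr k p.1 - (a + p.2 * δr k p.1) = δr k p.1 by ring]
        rw [hofδ]
    · simp [EMetric.diam]
  -- diameters tend to zero
  have hrlim : Tendsto ek atTop (nhds 0) :=
    ENNReal.tendsto_pow_atTop_nhds_zero_of_lt_one hhalf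
  -- coverage
  have hcover : ∀ k, s ×ˢ Set.Icc a (a + 1) ⊆ ⋃ p, u k p := by
    intro k ⟨x, y⟩ ⟨hx, hy⟩
    obtain ⟨i, hi⟩ := Set.mem_iUnion.mp (hcov k hx)
    have hδpos := hδr0 k i
    set j : ℕ := ⌊(y - a) / δr k i⌋₊ with hj
    have hy0 : 0 ≤ y - a := by linarith [hy.1]
    have hjle : (j : ℝ) ≤ (y - a) / δr k i := Nat.floor_le (by positivity)
    have hjlt : (y - a) / δr k i < (j : ℝ) + 1 := Nat.lt_floor_add_one _
    refine Set.mem_iUnion.mpr ⟨(i, j), ?_⟩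
    have h1 : (j : ℝ) * δr k i ≤ y - a := by
      calc (j : ℝ) * δr k i ≤ ((y - a) / δr k i) * δr k i :=
            mul_le_mul_of_nonneg_right hjle hδpos.le
        _ = y - a := div_mul_cancel₀ _ hδpos.ne'
    have hcond : (j : ℝ) * δr k i ≤ 1 := by linarith [hy.2]
    simp only [hu, hcond, if_pos]
    refine ⟨hi, ?_, ?_⟩
    · linarith
    · have : y - a < ((j : ℝ) + 1) * δr k i := by
        calc y - a = ((y - a) / δr k i) * δr k i := (div_mul_cancel₀ _ hδpos.ne').symm
        _ < ((j : ℝ) + 1) * δr k i := mul_lt_mul_of_pos_right hjlt hδpos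
      linarith
  -- sum bound
  have hsumbound : ∀ k, ∑' p : ℕ × ℕ, EMetric.diam (u k p) ^ ((m : ℝ) + 1) ≤ 6 * ek k := by
    intro k
    have hexp : ∀ x : ℝ≥0∞, x ^ ((m : ℝ) + 1) = x ^ (m + 1) := by
      intro x
      rw [← ENNReal.rpow_natCast x (m + 1)]
      norm_num
    calc ∑' p : ℕ × ℕ, EMetric.diam (u k p) ^ ((m : ℝ) + 1)
        = ∑' (i : ℕ) (j : ℕ), EMetric.diam (u k (i, j)) ^ (m + 1) := by
          rw [ENNReal.tsum_prod']; exact tsum_congr fun i => tsum_congr fun j => hexp _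
      _ ≤ ∑' i : ℕ, 2 * δ k i ^ m := by
          refine ENNReal.tsum_le_tsum fun i => ?_
          -- inner sum bound
          set M : ℕ := ⌊1 / δr k i⌋₊ with hM
          have hvanish : ∀ j ∉ Finset.range (M + 1),
              EMetric.diam (u k (i, j)) ^ (m + 1) = 0 := by
            intro j hj
            rw [Finset.mem_range, not_lt] at hj
            have : ¬ ((j : ℝ) * δr k i ≤ 1) := by
              rw [not_le]
              have h1 : 1 / δr k i < (M : ℝ) + 1 := Nat.lt_floor_add_one _
              have h2 : (M : ℝ) + 1 ≤ (j : ℝ) := by exact_mod_cast hj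
              have := hδr0 k i
              rw [div_lt_iff₀ this] at h1
              nlinarith
            simp only [hu, this, if_neg, not_false_iff]
            simp [EMetric.diam, zero_pow (Nat.succ_ne_zero m)]
          rw [tsum_eq_sum hvanish]
          have hterm : ∀ j ∈ Finset.range (M + 1),
              EMetric.diam (u k (i, j)) ^ (m + 1) ≤ δ k i ^ (m + 1) := fun j _ =>
            pow_le_pow_left' (hudiam k (i, j)) _
          calc ∑ j ∈ Finset.range (M + 1), EMetric.diam (u k (i, j)) ^ (m + 1)
              ≤ ∑ _j ∈ Finset.range (M + 1), δ k i ^ (m + 1) := Finset.sum_le_sum hterm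
            _ = (M + 1 : ℝ≥0∞) * δ k i ^ (m + 1) := by
                rw [Finset.sum_const, Finset.card_range, nsmul_eq_mul]; push_cast; ring
            _ ≤ (2 * (δ k i)⁻¹) * δ k i ^ (m + 1) := by
                gcongr
                have hMle : (M : ℝ≥0∞) ≤ (δ k i)⁻¹ := by
                  have h1 : (M : ℝ) ≤ 1 / δr k i := Nat.floor_le (by positivity)
                  have : (M : ℝ≥0∞) = ENNReal.ofReal (M : ℝ) := by
                    simp [ENNReal.ofReal_natCast]
                  rw [this, ← hofδ k i, ← ENNReal.ofReal_inv_of_pos (hδr0 k i)]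
                  exact ENNReal.ofReal_le_ofReal (by rw [one_div] at h1; exact h1)
                have h1le : (1 : ℝ≥0∞) ≤ (δ k i)⁻¹ :=
                  ENNReal.one_le_inv.mpr ((hδle k i).trans (hek1 k))
                calc (M + 1 : ℝ≥0∞) ≤ (δ k i)⁻¹ + (δ k i)⁻¹ := add_le_add hMle h1le
                  _ = 2 * (δ k i)⁻¹ := by ring
            _ = 2 * δ k i ^ m := by
                rw [pow_succ', mul_assoc, ← mul_assoc ((δ k i)⁻¹),
                  ENNReal.inv_mul_cancel (hδ0 k i) (hδtop k i), one_mul]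
      _ ≤ 2 * (∑' i : ℕ, (EMetric.diam (t k i) ^ m + (ek k * ek i) ^ m)) := by
          rw [ENNReal.tsum_mul_left]
          gcongr with i
          simp only [hδ]
          rcases max_cases (EMetric.diam (t k i)) (ek k * ek i) with ⟨h1, _⟩ | ⟨h1, _⟩ <;>
            rw [h1]
          · exact le_add_of_nonneg_right zero_le
          · exact le_add_of_nonneg_left zero_le
      _ ≤ 2 * (ek k + 2 * ek k) := by
          gcongr
          rw [ENNReal.tsum_add]
          gcongr
          · -- ∑ diam ^ m ≤ ek k
            refine le_trans (le_of_eq ?_) (hsum k).le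
            refine tsum_congr fun i => ?_
            rw [← ENNReal.rpow_natCast]
          · -- geometric part
            calc ∑' i : ℕ, (ek k * ek i) ^ m ≤ ∑' i : ℕ, ek k * ek i := by
                  refine ENNReal.tsum_le_tsum fun i => ?_
                  calc (ek k * ek i) ^ m ≤ (ek k * ek i) ^ 1 :=
                        pow_le_pow_right_of_le_one' (mul_le_one' (hek1 k) (hek1 i)) hm
                    _ = ek k * ek i := pow_one _
              _ = ek k * ∑' i : ℕ, (2⁻¹ : ℝ≥0∞) ^ i := by rw [ENNReal.tsum_mul_left]
              _ = ek k * 2 := by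
                  rw [ENNReal.tsum_geometric]
                  congr 1
                  rw [show (1 : ℝ≥0∞) - 2⁻¹ = 2⁻¹ by
                    rw [ENNReal.sub_eq_of_eq_add (by norm_num)]
                    rw [ENNReal.inv_two_add_inv_two]]
                  simp
              _ = 2 * ek k := mul_comm _ _
      _ = 6 * ek k := by ring
  -- conclude
  refine le_antisymm ?_ zero_le
  calc (μH[(m : ℝ) + 1] : Measure (X × ℝ)) (s ×ˢ Set.Icc a (a + 1))
      ≤ liminf (fun k => ∑' p : ℕ × ℕ, EMetric.diam (u k p) ^ ((m : ℝ) + 1)) atTop := by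
        refine Measure.hausdorffMeasure_le_liminf_tsum _ _ ek hrlim u ?_ ?_
        · exact Eventually.of_forall fun k p => (hudiam k p).trans (hδle k _)
        · exact Eventually.of_forall hcover
    _ ≤ liminf (fun k => 6 * ek k) atTop :=
        liminf_le_liminf (Eventually.of_forall hsumbound)
    _ = 0 := by
        refine Tendsto.liminf_eq ?_
        have : Tendsto (fun k => 6 * ek k) atTop (nhds (6 * 0)) :=
          ENNReal.Tendsto.const_mul hrlim (Or.inr (by norm_num))
        simpa using this

/-- Let `(X, d)` be a metric space and `E ⊆ X` a set on which the
`(n-1)`-dimensional Hausdorff measure is σ-finite. If `N ⊆ E` is `H^{n-1}`-null, then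
`N × ℝ` is `H^n`-null in the product metric space `X × ℝ` (sup-product metric). -/
theorem stmt19 {X : Type*} [MetricSpace X] [MeasurableSpace X] [BorelSpace X]
    (n : ℕ) (E N : Set X)
    (hsf : SigmaFinite ((μH[(n : ℝ) - 1] : Measure X).restrict E))
    (hNE : N ⊆ E) (hN : μH[(n : ℝ) - 1] N = 0) :
    (μH[(n : ℝ)] : Measure (X × ℝ)) (N ×ˢ (Set.univ : Set ℝ)) = 0 := by
  by_cases hn : 2 ≤ n
  · set m := n - 1 with hmdef
    have hm : 1 ≤ m := by omega
    have hc : ((m : ℕ) : ℝ) = (n : ℝ) - 1 := by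
      have hmn : m + 1 = n := by omega
      have : ((m : ℕ) : ℝ) + 1 = (n : ℝ) := by exact_mod_cast congrArg (Nat.cast : ℕ → ℝ) hmn
      linarith
    have hs : μH[(m : ℝ)] N = 0 := by rw [hc]; exact hN
    have hc2 : (m : ℝ) + 1 = (n : ℝ) := by rw [hc]; ring
    rw [← hc2]
    refine measure_mono_null ?_
      (measure_iUnion_null (fun k : ℤ => slab_null hm hs (k : ℝ)))
    rintro ⟨x, y⟩ ⟨hx, -⟩
    exact Set.mem_iUnion.mpr ⟨⌊y⌋, hx, Int.floor_le y, (Int.lt_floor_add_one y).le⟩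
  · have hle : (n : ℝ) - 1 ≤ 0 := by
      have : n ≤ 1 := by omega
      have : (n : ℝ) ≤ 1 := by exact_mod_cast this
      linarith
    have h0 : μH[(0 : ℝ)] N = 0 :=
      le_antisymm (le_trans (MeasureTheory.Measure.hausdorffMeasure_mono hle N) hN.le)
        zero_le
    have hNemp : N = ∅ := by
      by_contra h
      have hne : N.Nonempty := Set.nonempty_iff_ne_empty.mpr h
      have h1 := MeasureTheory.Measure.one_le_hausdorffMeasure_zero_of_nonempty hne
      rw [h0] at h1
      exact absurd h1 (by norm_num)
    simp [hNemp]
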